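/- In the setting of the compatible decompositions D^B = H^B ⊕ im ∂^B ⊕ L^B and D^Λ = H^Λ ⊕ im ∂^Λ ⊕ L^Λ with H^Λ = F(H^B) ⊕ Ĥ and L^Λ = F(L^B) ⊕ L̂, the homotopies h^B : D^B → D^B and h^Λ : D^Λ → D^Λ satisfy F(h^B(f)) = h^Λ(F(f)) for all f ∈ D^B. -/

import Mathlib

noncomputable section

universe u

/-- Data of a complete set of orthogonal idempotents indexed by the vertices `Fin n`
of a quiver, inside a `K`-algebra. -/
structure IdemData (K : Type u) [Field K] (n : ℕ) (B : Type u) [Ring B] [Algebra K B] where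
  e : Fin n → B
  orth : ∀ i j, e i * e j = if i = j then e i else 0
  complete : ∑ i, e i = 1

namespace IdemData

variable {K : Type u} [Field K] {n : ℕ} {B : Type u} [Ring B] [Algebra K B]

/-- Membership in the radical of a directed algebra: all "diagonal components" vanish.
For a directed (triangular, basic) algebra this is exactly the Jacobson radical. -/
def IsRad (d : IdemData K n B) (b : B) : Prop := ∀ i, d.e i * b * d.e i = 0

/-- A directed algebra: finite dimensional, basic, whose (Gabriel) quiver is acyclic with all
arrows `i ⟶ j` satisfying `i < j`.  Equivalently: `e j * B * e i = 0` for `j < i` and the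
"diagonal" components `e i * B * e i` are one-dimensional. -/
def Directed (d : IdemData K n B) : Prop :=
  FiniteDimensional K B ∧
  (∀ i j : Fin n, j < i → ∀ b : B, d.e j * b * d.e i = 0) ∧
  (∀ i : Fin n, ∀ b : B, ∃ c : K, d.e i * b * d.e i = c • d.e i)

/-- The opposite of a directed algebra (all arrows decrease); `A^op` for `A` directed. -/
def Codirected (d : IdemData K n B) : Prop :=
  FiniteDimensional K B ∧
  (∀ i j : Fin n, i < j → ∀ b : B, d.e j * b * d.e i = 0) ∧
  (∀ i : Fin n, ∀ b : B, ∃ c : K, d.e i * b * d.e i = c • d.e i)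

/-- The indecomposable projective left module `P(i) = B·e i`, realized as the left ideal
`{x | x * e i = x}`. -/
def proj (d : IdemData K n B) (i : Fin n) : Submodule B B where
  carrier := {x | x * d.e i = x}
  add_mem' := by
    intro a b ha hb
    simp only [Set.mem_setOf_eq] at *
    rw [add_mul, ha, hb]
  zero_mem' := by simp
  smul_mem' := by
    intro c x hx
    simp only [Set.mem_setOf_eq, smul_eq_mul] at *
    rw [mul_assoc, hx]

end IdemData

/-- The bilinear "multiplication" map `C ⊗ B → Λ`, `(c, b) ↦ ιC c * ιB b`. -/
def dualBil {K : Type u} [Field K] {B C L : Type u} [Ring B] [Algebra K B] [Ring C] [Algebra K C]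
    [Ring L] [Algebra K L] (ιB : B →ₐ[K] L) (ιC : C →ₐ[K] L) : C →ₗ[K] B →ₗ[K] L :=
  LinearMap.mk₂ K (fun c b => ιC c * ιB b)
    (fun c c' b => by simp only [map_add, add_mul])
    (fun k c b => by simp only [map_smul, smul_mul_assoc])
    (fun c b b' => by simp only [map_add, mul_add])
    (fun k c b => by simp only [map_smul, mul_smul_comm])

/-- `Λ` is the dual extension algebra `𝒜(B, C)` of `B` and `C` (in the paper `C = A^op`):
`B` and `C` embed as subalgebras, sharing the idempotents; the product of a radical element of
`B` with a radical element of `C` (in this order; i.e. all paths `α β'`) vanishes; and the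
products `ιC c * ιB b` span `Λ`, the only linear relations among them being the ones forced by
`ιC (c e_i) * ιB (e_j b) = 0` for `i ≠ j`.  This encodes `Λ ≅ ⊕_i C e_i ⊗ e_i B` as in
`Definition 2.1` of the paper. -/
structure DualExt (K : Type u) [Field K] (n : ℕ) (B C L : Type u) [Ring B] [Algebra K B]
    [Ring C] [Algebra K C] [Ring L] [Algebra K L]
    (dB : IdemData K n B) (dC : IdemData K n C) where
  ιB : B →ₐ[K] L
  ιC : C →ₐ[K] L
  injB : Function.Injective ιB
  injC : Function.Injective ιC
  idem : ∀ i, ιB (dB.e i) = ιC (dC.e i)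
  radMul : ∀ b c, dB.IsRad b → dC.IsRad c → ιB b * ιC c = 0
  spans : Submodule.span K {x : L | ∃ c b, x = ιC c * ιB b} = ⊤
  mulKer : LinearMap.ker (TensorProduct.lift (dualBil ιB ιC)) =
    Submodule.span K {x : TensorProduct K C B |
      ∃ i j : Fin n, i ≠ j ∧ ∃ c b, x = (c * dC.e i) ⊗ₜ[K] (dB.e j * b)}

/-- The left ideal `{x | x * a = x}`; for an idempotent `a = e i` this is the
indecomposable projective module `P(i) = B e i`. -/
def leftIdeal {L : Type u} [Ring L] (a : L) : Submodule L L where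
  carrier := {x | x * a = x}
  add_mem' := by
    intro x y hx hy
    simp only [Set.mem_setOf_eq] at *
    rw [add_mul, hx, hy]
  zero_mem' := by simp
  smul_mem' := by
    intro c x hx
    simp only [Set.mem_setOf_eq, smul_eq_mul] at *
    rw [mul_assoc, hx]

/-- A (ℤ-graded) dg-algebra of endomorphisms of a complex: the algebra `D` (modelling
`End(P•)` of a complex of projectives, whose elements are homogeneous graded endomorphisms,
not necessarily chain maps) with an internal grading, containing the differential of the
complex as a degree-one square-zero element `d`, and with the differential
`∂ f = d f − (−1)^{|f|} f d`. -/
structure DGA (K : Type u) [Field K] (D : Type u) [Ring D] [Algebra K D] where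
  gr : ℤ → Submodule K D
  internal : DirectSum.IsInternal gr
  one_mem : (1 : D) ∈ gr 0
  mul_mem : ∀ {a b : ℤ} {x y : D}, x ∈ gr a → y ∈ gr b → x * y ∈ gr (a + b)
  d : D
  d_mem : d ∈ gr 1
  d_sq : d * d = 0
  der : D →ₗ[K] D
  der_apply : ∀ (a : ℤ) (x : D), x ∈ gr a →
    der x = d * x - ((Int.negOnePow a : ℤ) • (x * d))

/-- Merkulov's construction (following Lu–Palmieri–Wu–Zhang; Section 6 of the paper):
a decomposition `D = H ⊕ im ∂ ⊕ L`, where `H` consists of cycles and realizes the homology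
(`H ≅ Ext*`), together with the projection `p : D → H`, the homotopy `h` (zero on `H ⊕ L`,
`∂⁻¹` on `im ∂`), the inductively defined maps
`λ₂ = multiplication`, `λ_n = Σ_{r+s=n, s ≥ 1} (−1)^{s+1} λ₂(hλ_r ⊗ hλ_s)` (`hλ₁ = −id`),
and the resulting `A∞`-multiplications `m_n = p ∘ λ_n ∘ i^{⊗n}` on `H ≅ Ext*`.
Tuples are written `(ε_n, …, ε_1)` with `v 0 = ε_1` the first map to be composed. -/
structure Merkulov (K : Type u) [Field K] (D : Type u) [Ring D] [Algebra K D]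
    (E : DGA K D) where
  H : ℤ → Submodule K D
  L : ℤ → Submodule K D
  H_le : ∀ a, H a ≤ E.gr a
  L_le : ∀ a, L a ≤ E.gr a
  H_cycle : ∀ a, ∀ x ∈ H a, E.der x = 0
  L_reg : ∀ a, ∀ x ∈ L a, E.der x = 0 → x = 0
  decomp : ∀ (a : ℤ), ∀ x ∈ E.gr a,
    ∃ xh ∈ H a, ∃ y ∈ L (a - 1), ∃ xl ∈ L a, x = xh + E.der y + xl
  indep : ∀ (a : ℤ), ∀ xh ∈ H a, ∀ y ∈ L (a - 1), ∀ xl ∈ L a,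
    xh + E.der y + xl = 0 → xh = 0 ∧ E.der y = 0 ∧ xl = 0
  p : D →ₗ[K] D
  p_H : ∀ a, ∀ x ∈ H a, p x = x
  p_bdry : ∀ x : D, p (E.der x) = 0
  p_L : ∀ a, ∀ x ∈ L a, p x = 0
  h : D →ₗ[K] D
  h_H : ∀ a, ∀ x ∈ H a, h x = 0
  h_L : ∀ a, ∀ x ∈ L a, h x = 0
  h_inv : ∀ a, ∀ x ∈ L a, h (E.der x) = x
  lam : ∀ k : ℕ, (Fin k → D) → D
  lam_two : ∀ v : Fin 2 → D, lam 2 v = v 1 * v 0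
  lam_rec : ∀ k : ℕ, 3 ≤ k → ∀ v : Fin k → D, lam k v =
    ∑ s ∈ (Finset.Ioo 0 k).attach,
      ((-1 : ℤ) ^ ((s : ℕ) + 1)) •
        ((if (k - (s : ℕ)) = 1 then
            -(v ⟨(s : ℕ), by have := Finset.mem_Ioo.mp s.property; omega⟩)
          else h (lam (k - (s : ℕ)) (fun i : Fin (k - (s : ℕ)) =>
            v ⟨(s : ℕ) + (i : ℕ), by
              have := Finset.mem_Ioo.mp s.property
              have := i.isLt
              omega⟩))) *
         (if (s : ℕ) = 1 then
            -(v ⟨0, by have := Finset.mem_Ioo.mp s.property; omega⟩)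
          else h (lam (s : ℕ) (fun i : Fin (s : ℕ) =>
            v ⟨(i : ℕ), by
              have := Finset.mem_Ioo.mp s.property
              have := i.isLt
              omega⟩))))
  m : ∀ k : ℕ, (Fin k → D) → D
  m_def : ∀ (k : ℕ) (v : Fin k → D), m k v = p (lam k v)

/-- Corollary 6.7 of the paper.
In the setting of the compatible decompositions
`D^B = H^B ⊕ im ∂^B ⊕ L^B` and `D^Λ = H^Λ ⊕ im ∂^Λ ⊕ L^Λ` with `H^Λ = F(H^B) ⊕ Ĥ` and
`L^Λ = F(L^B) ⊕ L̂` (Statement 10), the homotopies `h^B : D^B → D^B` and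
`h^Λ : D^Λ → D^Λ` of Merkulov's construction satisfy `F(h^B(f)) = h^Λ(F(f))` for all
`f ∈ D^B`. -/
theorem statement12
    (K : Type) [Field K] [IsAlgClosed K] (n : ℕ)
    (B C L : Type) [Ring B] [Algebra K B] [Ring C] [Algebra K C] [Ring L] [Algebra K L]
    (dB : IdemData K n B) (dC : IdemData K n C)
    (hB : dB.Directed) (hC : dC.Codirected)
    (DEx : DualExt K n B C L dB dC)
    (DB DL : Type) [Ring DB] [Algebra K DB] [Ring DL] [Algebra K DL]
    (EB : DGA K DB) (EL : DGA K DL)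
    (F : DB →ₐ[K] DL) (hFinj : Function.Injective F)
    (hFgr : ∀ (a : ℤ) (x : DB), x ∈ EB.gr a → F x ∈ EL.gr a)
    (hFd : F EB.d = EL.d)
    -- Merkulov data with the compatible decompositions of Statement 10
    (MB : Merkulov K DB EB) (ML : Merkulov K DL EL)
    (Hhat Lhat : ℤ → Submodule K DL)
    (hH : ∀ a, ML.H a = (MB.H a).map F.toLinearMap ⊔ Hhat a)
    (hL : ∀ a, ML.L a = (MB.L a).map F.toLinearMap ⊔ Lhat a) :
    ∀ f : DB, F (MB.h f) = ML.h (F f) := by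
  -- First prove the statement for elements of a fixed graded piece.
  have key : ∀ (a : ℤ) (f : DB), f ∈ EB.gr a → F (MB.h f) = ML.h (F f) := by
    intro a f hf
    obtain ⟨xh, hxh, y, hy, xl, hxl, rfl⟩ := MB.decomp a f hf
    have hFderx : F (EB.der y) = EL.der (F y) := by
      have hyg : y ∈ EB.gr (a - 1) := MB.L_le _ hy
      rw [EB.der_apply (a - 1) y hyg, EL.der_apply (a - 1) (F y) (hFgr _ _ hyg)]
      simp [map_sub, map_mul, map_zsmul, hFd]
    have hFxh : F xh ∈ ML.H a := by
      rw [hH a]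
      exact Submodule.mem_sup_left (Submodule.mem_map_of_mem hxh)
    have hFy : F y ∈ ML.L (a - 1) := by
      rw [hL (a - 1)]
      exact Submodule.mem_sup_left (Submodule.mem_map_of_mem hy)
    have hFxl : F xl ∈ ML.L a := by
      rw [hL a]
      exact Submodule.mem_sup_left (Submodule.mem_map_of_mem hxl)
    simp only [map_add]
    rw [hFderx, MB.h_H a xh hxh, MB.h_inv (a - 1) y hy, MB.h_L a xl hxl,
      ML.h_H a (F xh) hFxh, ML.h_inv (a - 1) (F y) hFy, ML.h_L a (F xl) hFxl]
    simp
  intro f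
  have htop : f ∈ ⨆ a, EB.gr a := by
    rw [EB.internal.submodule_iSup_eq_top]; trivial
  refine Submodule.iSup_induction (motive := fun x => F (MB.h x) = ML.h (F x)) EB.gr htop
    (fun a x hx => key a x hx) (by simp) ?_
  intro x z hx hz
  rw [map_add, map_add, map_add, map_add, hx, hz]
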